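/- (Singular compactness step) Let κ be a singular cardinal of uncountable cofinality Θ, witnessed by an increasing sequence of cardinals (κ_α)_{α<Θ} with supremum κ. Suppose M is an algebra on κ such that each κ_α is closed under the operations in a suitable sense: for each α < Θ and each operation f, f maps κ_γ^{arity} into κ_γ for all γ ≥ some index depending on f, and moreover each κ_α carries an Artinian subalgebra structure. If M ∩ κ_α is a subalgebra for each α and each of these restricted algebras is Artinian, then M is Artinian. -/

import Mathlib

universe u

structure Alg (ι : Type u) (M : Type u) where
  arity : ι → ℕ
  op : (i : ι) → (Fin (arity i) → M) → M

namespace Alg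

variable {ι M : Type u}

/-- A set is closed under all operations of the algebra. -/
def Closed (A : Alg ι M) (S : Set M) : Prop :=
  ∀ (i : ι) (x : Fin (A.arity i) → M), (∀ k, x k ∈ S) → A.op i x ∈ S

/-- Membership in the subalgebra generated by `X`. -/
inductive cl (A : Alg ι M) (X : Set M) : M → Prop
  | base {m : M} (h : m ∈ X) : cl A X m
  | op (i : ι) (x : Fin (A.arity i) → M) (h : ∀ k, cl A X (x k)) : cl A X (A.op i x)

/-- A subset is free if no element lies in the subalgebra generated by the others. -/
def Free (A : Alg ι M) (X : Set M) : Prop :=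
  ∀ x ∈ X, ¬ A.cl (X \ {x}) x

/-- An algebra is Artinian if there is no infinite strictly descending chain of
(nonempty closed) subalgebras. -/
def Artinian (A : Alg ι M) : Prop :=
  ¬ ∃ S : ℕ → Set M, (∀ n, (S n).Nonempty ∧ A.Closed (S n)) ∧ ∀ n, S (n + 1) ⊂ S n

end Alg

open Cardinal

/-- singular compactness step: Let Θ be a regular uncountable cardinal
and `K : Θ.ord.ToType → Set M` a monotone family covering `M` (the traces of the
cardinals κ_α on the carrier). If for every descending ω-chain of subalgebras the
trace on each `K α` stabilizes, then every descending ω-chain of subalgebras of the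
algebra stabilizes (the algebra is Artinian). -/
theorem stmt13 {ι M : Type u} (A : Alg ι M) (Θ : Cardinal.{u})
    (hreg : Θ.IsRegular) (hunc : ℵ₀ < Θ)
    (K : Θ.ord.ToType → Set M) (hmono : Monotone K)
    (hcover : ∀ m : M, ∃ α, m ∈ K α)
    (htrace : ∀ Mn : ℕ → Set M, (∀ n, A.Closed (Mn n)) → (∀ n, Mn (n + 1) ⊆ Mn n) →
      ∀ α, ∃ N, ∀ n, N ≤ n → Mn n ∩ K α = Mn N ∩ K α) :
    ∀ Mn : ℕ → Set M, (∀ n, A.Closed (Mn n)) → (∀ n, Mn (n + 1) ⊆ Mn n) →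
      ∃ N, ∀ n, N ≤ n → Mn n = Mn N := by
  intro Mn hclosed hchain
  have hanti : Antitone Mn := antitone_nat_of_succ_le hchain
  -- choose stabilization index for each α
  choose Nf hNf using htrace Mn hclosed hchain
  haveI : IsWellOrder Θ.ord.ToType (· < ·) := isWellOrder_lt
  haveI : NoMaxOrder Θ.ord.ToType := Cardinal.noMaxOrder hreg.aleph0_le
  -- fibers of Nf
  set s : ULift.{u} ℕ → Set Θ.ord.ToType := fun k => {α | Nf α = k.down} with hs
  have h₁ : IsCofinal (⋃ k, s k) := by
    intro a
    exact ⟨a, Set.mem_iUnion.2 ⟨⟨Nf a⟩, rfl⟩, le_rfl⟩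
  have h₂ : #(ULift.{u} ℕ) < Order.cof Θ.ord.ToType := by
    rw [Ordinal.cof_toType]
    simpa [Cardinal.mk_uLift] using hunc.trans_eq hreg.cof_ord.symm
  obtain ⟨k, hk⟩ := isCofinal_of_isCofinal_iUnion h₁ h₂
  refine ⟨k.down, fun n hn => ?_⟩
  refine Set.Subset.antisymm (hanti hn) fun m hm => ?_
  obtain ⟨α, hα⟩ := hcover m
  obtain ⟨β, hβ, hβα⟩ := hk α
  have hmK : m ∈ K β := hmono hβα hα
  have := hNf β n (by rw [hβ]; exact hn)
  rw [hβ] at this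
  have : m ∈ Mn n ∩ K β := by rw [this]; exact ⟨hm, hmK⟩
  exact this.1
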